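/- Let X and Y be finite simple graphs. Then ϑ⁻(X[Y]) = ϑ⁻(X)·ϑ⁻(Y) = ϑ⁻(X * Y), where for a graph Z, ϑ⁻(Z) is the supremum of ∑_{z,z'} M_{z,z'} over doubly nonnegative matrices M indexed by V(Z) with tr(M) = 1 and M_{z,z'} = 0 whenever z is adjacent to z' in Z. -/

import Mathlib

open Matrix

/-- A real matrix is completely positive if it equals `Pᵀ * P`
for some entrywise nonnegative real matrix `P`. -/
def IsCP {ι : Type*} (H : Matrix ι ι ℝ) : Prop :=
  ∃ (n : ℕ) (P : Matrix (Fin n) ι ℝ), (∀ i j, 0 ≤ P i j) ∧ H = Pᵀ * P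

/-- A real matrix indexed by `ι` is completely positive semidefinite if it is the Gram
matrix of real positive semidefinite `d × d` matrices for some `d ≥ 1`. -/
def IsCPSD {ι : Type*} (H : Matrix ι ι ℝ) : Prop :=
  ∃ d : ℕ, 0 < d ∧ ∃ ρ : ι → Matrix (Fin d) (Fin d) ℝ,
    (∀ i, (ρ i).PosSemidef) ∧ ∀ i j, H i j = (ρ i * ρ j).trace

/-- A real matrix is doubly nonnegative if it is positive semidefinite
and entrywise nonnegative. -/
def IsDNN {ι : Type*} [Fintype ι] (H : Matrix ι ι ℝ) : Prop :=
  H.PosSemidef ∧ ∀ i j, 0 ≤ H i j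

/-- Schrijver's theta `ϑ⁻(Z)`: optimize over doubly nonnegative matrices. -/
noncomputable def thetaMinus {γ : Type*} [Fintype γ] (Z : SimpleGraph γ) : ℝ :=
  sSup {r : ℝ | ∃ M : Matrix γ γ ℝ, IsDNN M ∧ M.trace = 1 ∧
    (∀ z z', Z.Adj z z' → M z z' = 0) ∧ r = ∑ z, ∑ z', M z z'}

/-- Szegedy's theta of the complement, `ϑ̄⁺(Z) = Θ^{DNN}(Z)`. -/
noncomputable def thetaBarPlus {γ : Type*} [Fintype γ] (Z : SimpleGraph γ) : ℝ :=
  sInf {t : ℝ | ∃ N : Matrix γ γ ℝ, IsDNN N ∧ (∀ z, N z z = t) ∧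
    (∀ z z', Z.Adj z z' → N z z' = 0) ∧
    (N - Matrix.of fun _ _ => (1 : ℝ)).PosSemidef}

/-- The lexicographic product `X[Y]`. -/
def lexProd {α β : Type*} (X : SimpleGraph α) (Y : SimpleGraph β) :
    SimpleGraph (α × β) where
  Adj p q := X.Adj p.1 q.1 ∨ (p.1 = q.1 ∧ Y.Adj p.2 q.2)
  symm := by
    constructor
    rintro ⟨x, y⟩ ⟨x', y'⟩ (h | ⟨h1, h2⟩)
    · exact Or.inl h.symm
    · exact Or.inr ⟨h1.symm, h2.symm⟩
  loopless := by constructor; rintro ⟨x, y⟩ (h | ⟨_, h⟩) <;> exact h.ne rfl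

/-- The disjunctive product `X * Y`. -/
def disjProd {α β : Type*} (X : SimpleGraph α) (Y : SimpleGraph β) :
    SimpleGraph (α × β) where
  Adj p q := X.Adj p.1 q.1 ∨ Y.Adj p.2 q.2
  symm := by
    constructor
    rintro ⟨x, y⟩ ⟨x', y'⟩ (h | h)
    · exact Or.inl h.symm
    · exact Or.inr h.symm
  loopless := by constructor; rintro ⟨x, y⟩ (h | h) <;> exact h.ne rfl


section auxiliaryLemmas
open Kronecker Finset

variable {ι : Type*} [Fintype ι]

lemma psd_smul' {M : Matrix ι ι ℝ} (hM : M.PosSemidef) {c : ℝ} (hc : 0 ≤ c) :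
    (c • M).PosSemidef := by
  rw [posSemidef_iff_dotProduct_mulVec]
  constructor
  · unfold Matrix.IsHermitian
    rw [conjTranspose_smul, hM.1]
    simp
  · intro x
    have := hM.dotProduct_mulVec_nonneg x
    rw [smul_mulVec, dotProduct_smul]
    exact mul_nonneg hc this

lemma psd_entry_le' {M : Matrix ι ι ℝ} (hM : M.PosSemidef) (i j : ι) :
    M i j ≤ (M i i + M j j) / 2 := by
  classical
  by_cases hij : i = j
  · subst hij; linarith
  · have h := hM.dotProduct_mulVec_nonneg (Pi.single i (1:ℝ) - Pi.single j 1)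
    have hsym : M j i = M i j := by
      have := hM.1.apply j i
      simpa using this.symm
    rw [star_trivial, mulVec_sub, dotProduct_sub, sub_dotProduct, sub_dotProduct,
      mulVec_single, mulVec_single] at h
    simp only [single_dotProduct, mul_one, one_mul, MulOpposite.op_one, one_smul, Matrix.col_apply] at h
    linarith

/-- The feasible set of Schrijver's theta program. -/
def feasSet {γ : Type*} [Fintype γ] (Z : SimpleGraph γ) : Set ℝ :=
  {r : ℝ | ∃ M : Matrix γ γ ℝ, IsDNN M ∧ M.trace = 1 ∧
    (∀ z z', Z.Adj z z' → M z z' = 0) ∧ r = ∑ z, ∑ z', M z z'}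

lemma thetaMinus_def {γ : Type*} [Fintype γ] (Z : SimpleGraph γ) :
    thetaMinus Z = sSup (feasSet Z) := rfl

lemma feas_nonneg {γ : Type*} [Fintype γ] {Z : SimpleGraph γ} {r : ℝ}
    (hr : r ∈ feasSet Z) : 0 ≤ r := by
  obtain ⟨M, hM, -, -, rfl⟩ := hr
  exact Finset.sum_nonneg fun z _ => Finset.sum_nonneg fun z' _ => hM.2 z z'

lemma feas_bdd {γ : Type*} [Fintype γ] (Z : SimpleGraph γ) :
    BddAbove (feasSet Z) := by
  refine ⟨(Fintype.card γ : ℝ), fun r hr => ?_⟩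
  obtain ⟨M, hM, htr, -, rfl⟩ := hr
  have h1 : ∑ z, ∑ z', M z z' ≤ ∑ z, ∑ z', (M z z + M z' z') / 2 :=
    Finset.sum_le_sum fun z _ => Finset.sum_le_sum fun z' _ => psd_entry_le' hM.1 z z'
  have h2 : ∑ z : γ, ∑ z' : γ, (M z z + M z' z') / 2 = (Fintype.card γ : ℝ) * M.trace := by
    simp only [Matrix.trace, Matrix.diag, add_div, Finset.sum_add_distrib, Finset.sum_const,
      Finset.card_univ, nsmul_eq_mul, ← Finset.sum_div]
    rw [← Finset.mul_sum, ← Finset.sum_div]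
    ring
  rw [htr, mul_one] at h2
  linarith

lemma theta_nonneg {γ : Type*} [Fintype γ] (Z : SimpleGraph γ) : 0 ≤ thetaMinus Z :=
  Real.sSup_nonneg fun _ hr => feas_nonneg hr

lemma mem_le_theta {γ : Type*} [Fintype γ] {Z : SimpleGraph γ} {r : ℝ}
    (hr : r ∈ feasSet Z) : r ≤ thetaMinus Z :=
  le_csSup (feas_bdd Z) hr

lemma one_mem_feas {γ : Type*} [Fintype γ] [Nonempty γ] (Z : SimpleGraph γ) :
    (1 : ℝ) ∈ feasSet Z := by
  classical
  have hc : (0 : ℝ) < (Fintype.card γ : ℝ) := by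
    exact_mod_cast Fintype.card_pos
  refine ⟨Matrix.diagonal (fun _ => (Fintype.card γ : ℝ)⁻¹), ⟨?_, ?_⟩, ?_, ?_, ?_⟩
  · exact PosSemidef.diagonal fun _ => by positivity
  · intro i j
    rw [Matrix.diagonal_apply]
    split <;> positivity
  · simp only [Matrix.trace_diagonal, Finset.sum_const, Finset.card_univ, nsmul_eq_mul]
    field_simp
  · intro z z' h
    exact Matrix.diagonal_apply_ne _ (Ne.symm h.ne).symm
  · rw [eq_comm]
    have : ∀ z : γ, ∑ z' : γ, Matrix.diagonal (fun _ => (Fintype.card γ : ℝ)⁻¹) z z'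
        = (Fintype.card γ : ℝ)⁻¹ := by
      intro z
      simp [Matrix.diagonal_apply]
    rw [Finset.sum_congr rfl fun z _ => this z]
    simp only [Finset.sum_const, Finset.card_univ, nsmul_eq_mul]
    field_simp

lemma one_le_theta {γ : Type*} [Fintype γ] [Nonempty γ] (Z : SimpleGraph γ) :
    1 ≤ thetaMinus Z := mem_le_theta (one_mem_feas Z)

lemma theta_empty {γ : Type*} [Fintype γ] [IsEmpty γ] (Z : SimpleGraph γ) :
    thetaMinus Z = 0 := by
  have : feasSet Z = ∅ := by
    ext r
    simp only [Set.mem_empty_iff_false, iff_false]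
    rintro ⟨M, -, htr, -, -⟩
    rw [Matrix.trace] at htr
    simp [Finset.univ_eq_empty] at htr
  rw [thetaMinus_def, this, Real.sSup_empty]

lemma sum_le_trace_mul_theta {γ : Type*} [Fintype γ] (Z : SimpleGraph γ)
    (M : Matrix γ γ ℝ) (hpsd : M.PosSemidef) (hnn : ∀ i j, 0 ≤ M i j)
    (hadj : ∀ z z', Z.Adj z z' → M z z' = 0) :
    ∑ z, ∑ z', M z z' ≤ M.trace * thetaMinus Z := by
  have ht0 : 0 ≤ M.trace := Finset.sum_nonneg fun z _ => hnn z z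
  rcases eq_or_lt_of_le ht0 with ht | ht
  · have hdiag : ∀ z : γ, M z z = 0 := by
      have := (Finset.sum_eq_zero_iff_of_nonneg (fun z _ => hnn z z)).1 ht.symm
      intro z; exact this z (Finset.mem_univ z)
    have hent : ∀ z z', M z z' = 0 := fun z z' =>
      le_antisymm (by have := psd_entry_le' hpsd z z'; rw [hdiag z, hdiag z'] at this; linarith)
        (hnn z z')
    rw [← ht]
    simp [hent]
  · set t := M.trace with htdef
    have hmem : t⁻¹ * ∑ z, ∑ z', M z z' ∈ feasSet Z := by
      refine ⟨t⁻¹ • M, ⟨psd_smul' hpsd (by positivity), fun i j => ?_⟩, ?_, ?_, ?_⟩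
      · exact mul_nonneg (by positivity) (hnn i j)
      · rw [Matrix.trace_smul]
        simp only [smul_eq_mul]
        field_simp
        exact htdef.symm
      · intro z z' h
        simp [Matrix.smul_apply, hadj z z' h]
      · simp only [Matrix.smul_apply, smul_eq_mul, ← Finset.mul_sum]
    have := mem_le_theta hmem
    calc ∑ z, ∑ z', M z z' = t * (t⁻¹ * ∑ z, ∑ z', M z z') := by field_simp
    _ ≤ t * thetaMinus Z := mul_le_mul_of_nonneg_left this (le_of_lt ht)

lemma psd_kron {m n : Type*} [Fintype m] [Fintype n]
    {M : Matrix m m ℝ} {N : Matrix n n ℝ} (hM : M.PosSemidef) (hN : N.PosSemidef) :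
    (M ⊗ₖ N).PosSemidef := by
  exact hM.kronecker hN

lemma kron_sum {m n : Type*} [Fintype m] [Fintype n]
    (M : Matrix m m ℝ) (N : Matrix n n ℝ) :
    ∑ p : m × n, ∑ q : m × n, (M ⊗ₖ N) p q = (∑ x, ∑ x', M x x') * (∑ y, ∑ y', N y y') := by
  simp only [Fintype.sum_prod_type, Matrix.kroneckerMap_apply]
  rw [Finset.sum_mul_sum]
  refine Finset.sum_congr rfl fun x _ => ?_
  refine Finset.sum_congr rfl fun y _ => ?_
  rw [Finset.sum_mul_sum]

lemma kron_mem {α β : Type*} [Fintype α] [Fintype β] (X : SimpleGraph α) (Y : SimpleGraph β)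
    {r s : ℝ} (hr : r ∈ feasSet X) (hs : s ∈ feasSet Y) :
    r * s ∈ feasSet (disjProd X Y) := by
  obtain ⟨M, hM, hMtr, hMadj, rfl⟩ := hr
  obtain ⟨N, hN, hNtr, hNadj, rfl⟩ := hs
  refine ⟨M ⊗ₖ N, ⟨psd_kron hM.1 hN.1, fun p q => mul_nonneg (hM.2 _ _) (hN.2 _ _)⟩, ?_, ?_, ?_⟩
  · rw [Matrix.trace_kronecker, hMtr, hNtr, mul_one]
  · rintro p q (h | h)
    · simp [Matrix.kroneckerMap_apply, hMadj _ _ h]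
    · simp [Matrix.kroneckerMap_apply, hNadj _ _ h]
  · exact (kron_sum M N).symm

lemma lex_sum_le {α β : Type*} [Fintype α] [Fintype β]
    (X : SimpleGraph α) (Y : SimpleGraph β) {r : ℝ}
    (hr : r ∈ feasSet (lexProd X Y)) :
    r ≤ thetaMinus X * thetaMinus Y := by
  classical
  obtain ⟨M, hM, hMtr, hMadj, rfl⟩ := hr
  set B : Matrix α α ℝ := Matrix.of (fun x x' => ∑ y, ∑ y', M (x, y) (x', y')) with hB
  have hMsym : ∀ p q, M q p = M p q := fun p q => by
    have := hM.1.1.apply q p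
    simpa using this.symm
  have hBpsd : B.PosSemidef := by
    rw [posSemidef_iff_dotProduct_mulVec]
    constructor
    · ext x x'
      simp only [Matrix.conjTranspose_apply, star_trivial, hB, Matrix.of_apply]
      rw [Finset.sum_comm]
      exact Finset.sum_congr rfl fun y _ => Finset.sum_congr rfl fun y' _ => hMsym _ _
    · intro v
      have key : (star v) ⬝ᵥ (B *ᵥ v)
          = (star (fun p : α × β => v p.1)) ⬝ᵥ (M *ᵥ (fun p => v p.1)) := by
        simp only [star_trivial, dotProduct, mulVec, Fintype.sum_prod_type, hB, Matrix.of_apply,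
          Finset.mul_sum, Finset.sum_mul]
        refine Finset.sum_congr rfl fun x _ => ?_
        rw [Finset.sum_comm]
      rw [key]
      exact hM.1.dotProduct_mulVec_nonneg _
  have hBnn : ∀ x x', 0 ≤ B x x' := fun x x' =>
    Finset.sum_nonneg fun y _ => Finset.sum_nonneg fun y' _ => hM.2 _ _
  have hBadj : ∀ x x', X.Adj x x' → B x x' = 0 := by
    intro x x' h
    simp only [hB, Matrix.of_apply]
    exact Finset.sum_eq_zero fun y _ => Finset.sum_eq_zero fun y' _ => hMadj _ _ (Or.inl h)
  have hD : ∀ x : α, ∑ y, ∑ y', M (x, y) (x, y') ≤ (∑ y, M (x, y) (x, y)) * thetaMinus Y := by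
    intro x
    have := sum_le_trace_mul_theta Y (M.submatrix (fun y => (x, y)) (fun y => (x, y)))
      (hM.1.submatrix _) (fun i j => hM.2 _ _)
      (fun y y' h => hMadj _ _ (Or.inr ⟨rfl, h⟩))
    simpa [Matrix.trace, Matrix.diag, Matrix.submatrix_apply] using this
  have hBtr : B.trace ≤ thetaMinus Y := by
    calc B.trace = ∑ x, ∑ y, ∑ y', M (x, y) (x, y') := by
          simp [Matrix.trace, Matrix.diag, hB]
    _ ≤ ∑ x, (∑ y, M (x, y) (x, y)) * thetaMinus Y := Finset.sum_le_sum fun x _ => hD x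
    _ = (∑ x, ∑ y, M (x, y) (x, y)) * thetaMinus Y := by rw [Finset.sum_mul]
    _ = M.trace * thetaMinus Y := by
          simp [Matrix.trace, Matrix.diag, Fintype.sum_prod_type]
    _ = thetaMinus Y := by rw [hMtr, one_mul]
  have hBsum := sum_le_trace_mul_theta X B hBpsd hBnn hBadj
  have hsum_eq : ∑ x, ∑ x', B x x' = ∑ p, ∑ q, M p q := by
    simp only [hB, Matrix.of_apply, Fintype.sum_prod_type]
    exact Finset.sum_congr rfl fun x _ => Finset.sum_comm
  calc ∑ p, ∑ q, M p q = ∑ x, ∑ x', B x x' := hsum_eq.symm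
  _ ≤ B.trace * thetaMinus X := hBsum
  _ ≤ thetaMinus Y * thetaMinus X := mul_le_mul_of_nonneg_right hBtr (theta_nonneg X)
  _ = thetaMinus X * thetaMinus Y := mul_comm _ _

end auxiliaryLemmas

theorem stmt_14 {α β : Type*} [Fintype α] [Fintype β]
    (X : SimpleGraph α) (Y : SimpleGraph β) :
    thetaMinus (lexProd X Y) = thetaMinus X * thetaMinus Y ∧
    thetaMinus X * thetaMinus Y = thetaMinus (disjProd X Y) := by
  have hdl : thetaMinus (disjProd X Y) ≤ thetaMinus (lexProd X Y) := by
    refine Real.sSup_le ?_ (theta_nonneg _)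
    rintro r ⟨M, hM, htr, hadj, rfl⟩
    exact mem_le_theta ⟨M, hM, htr, fun z z' h => hadj z z' (h.imp id And.right), rfl⟩
  have hld : thetaMinus (lexProd X Y) ≤ thetaMinus X * thetaMinus Y :=
    Real.sSup_le (fun r hr => lex_sum_le X Y hr)
      (mul_nonneg (theta_nonneg X) (theta_nonneg Y))
  have hxy : thetaMinus X * thetaMinus Y ≤ thetaMinus (disjProd X Y) := by
    cases isEmpty_or_nonempty α with
    | inl h => rw [theta_empty X, zero_mul]; exact theta_nonneg _
    | inr _ =>
      cases isEmpty_or_nonempty β with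
      | inl h => rw [theta_empty Y, mul_zero]; exact theta_nonneg _
      | inr _ =>
        have hY1 : (0 : ℝ) < thetaMinus Y := lt_of_lt_of_le one_pos (one_le_theta Y)
        have step1 : ∀ r ∈ feasSet X, r * thetaMinus Y ≤ thetaMinus (disjProd X Y) := by
          intro r hr
          rcases (feas_nonneg hr).eq_or_lt with h0 | h0
          · rw [← h0, zero_mul]; exact theta_nonneg _
          · have hsup : sSup (feasSet Y) ≤ thetaMinus (disjProd X Y) / r :=
              csSup_le ⟨1, one_mem_feas Y⟩ (fun s hs => (le_div_iff₀ h0).2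
                (by rw [mul_comm]; exact mem_le_theta (kron_mem X Y hr hs)))
            rw [thetaMinus_def Y]
            calc r * sSup (feasSet Y) ≤ r * (thetaMinus (disjProd X Y) / r) :=
                  mul_le_mul_of_nonneg_left hsup (le_of_lt h0)
            _ = thetaMinus (disjProd X Y) := by field_simp
        have hXle : thetaMinus X ≤ thetaMinus (disjProd X Y) / thetaMinus Y := by
          rw [thetaMinus_def X]
          exact csSup_le ⟨1, one_mem_feas X⟩ fun r hr => (le_div_iff₀ hY1).2 (step1 r hr)
        calc thetaMinus X * thetaMinus Y
            ≤ (thetaMinus (disjProd X Y) / thetaMinus Y) * thetaMinus Y :=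
              mul_le_mul_of_nonneg_right hXle (le_of_lt hY1)
        _ = thetaMinus (disjProd X Y) := by field_simp
  exact ⟨le_antisymm hld (hxy.trans hdl), le_antisymm hxy (hdl.trans hld)⟩
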